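/- Let x : ℝ → ℝⁿ be twice differentiable, let S : ℝ → ℝ be a twice differentiable bijection with everywhere nonzero derivative and twice differentiable inverse, and define y = x ∘ S⁻¹. If x satisfies x''(t) + φ(t) x'(t) + ∇V(x(t)) = 0 where S'' + φ S' = 0, then y satisfies y''(s) + ((S⁻¹)'(s))² ∇V(y(s)) = 0 for all s. -/

import Mathlib

/-- a linearly damped conservative system `x'' + φ x' + ∇V(x) = 0`
becomes the nonautonomous system `y'' + ((S⁻¹)')² ∇V(y) = 0` under the time
reparametrization `s = S(t)` with `S'' + φ S' = 0`, where `y = x ∘ S⁻¹`. -/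
theorem damped_to_nonautonomous
    {n : ℕ} (x : ℝ → EuclideanSpace ℝ (Fin n)) (φ : ℝ → ℝ)
    (gradV : EuclideanSpace ℝ (Fin n) → EuclideanSpace ℝ (Fin n))
    (S Sinv : ℝ → ℝ)
    (hx : ∀ t, DifferentiableAt ℝ x t)
    (hx' : ∀ t, DifferentiableAt ℝ (deriv x) t)
    (hSdiff : ∀ t, DifferentiableAt ℝ S t)
    (hSdiff' : ∀ t, DifferentiableAt ℝ (deriv S) t)
    (hSinvdiff : ∀ s, DifferentiableAt ℝ Sinv s)
    (hSinvdiff' : ∀ s, DifferentiableAt ℝ (deriv Sinv) s)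
    (hbij : Function.Bijective S)
    (hleft : Function.LeftInverse Sinv S)
    (hright : Function.RightInverse Sinv S)
    (hS' : ∀ t, deriv S t ≠ 0)
    (hSode : ∀ t, deriv (deriv S) t + φ t * deriv S t = 0)
    (heq : ∀ t, deriv (deriv x) t + φ t • deriv x t + gradV (x t) = 0)
    (y : ℝ → EuclideanSpace ℝ (Fin n)) (hy : y = x ∘ Sinv) :
    ∀ s : ℝ, deriv (deriv y) s + (deriv Sinv s) ^ 2 • gradV (y s) = 0 := by
  -- first derivative of y
  have hy1 : ∀ s, deriv y s = deriv Sinv s • deriv x (Sinv s) := by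
    intro s
    rw [hy]
    exact deriv.scomp s (hx _) (hSinvdiff s)
  have hy1' : deriv y = fun s => deriv Sinv s • deriv x (Sinv s) := funext hy1
  -- derivative of x' ∘ Sinv
  have hcomp : ∀ s, deriv (fun s => deriv x (Sinv s)) s
      = deriv Sinv s • deriv (deriv x) (Sinv s) := fun s =>
    deriv.scomp s (hx' _) (hSinvdiff s)
  -- chain rule relation : S'(Sinv s) * Sinv'(s) = 1
  have hchain : ∀ s, deriv S (Sinv s) * deriv Sinv s = 1 := by
    intro s
    have h1 : (fun s => S (Sinv s)) = id := funext hright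
    have h2 : deriv (fun s => S (Sinv s)) s = deriv S (Sinv s) * deriv Sinv s :=
      deriv_comp s (hSdiff _) (hSinvdiff s)
    rw [h1, deriv_id] at h2
    exact h2.symm
  intro s
  set τ := Sinv s with hτ
  set c := deriv Sinv s with hc
  -- second derivative relation for Sinv
  have hdiffcomp : DifferentiableAt ℝ (fun s => deriv S (Sinv s)) s :=
    (hSdiff' _).comp s (hSinvdiff s)
  have hrel : deriv (fun s => deriv S (Sinv s)) s * c
      + deriv S τ * deriv (deriv Sinv) s = 0 := by
    have h1 : (fun s => deriv S (Sinv s) * deriv Sinv s) = fun _ => (1:ℝ) :=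
      funext hchain
    have h2 := deriv_fun_mul hdiffcomp (hSinvdiff' s)
    rw [h1] at h2
    simpa using h2.symm
  have hcomp2 : deriv (fun s => deriv S (Sinv s)) s = c * deriv (deriv S) τ := by
    have := deriv_comp s (hSdiff' (Sinv s)) (hSinvdiff s)
    simpa [mul_comm, Function.comp_def] using this
  -- Sinv'' = φ(τ) * c^2
  have hSinv'' : deriv (deriv Sinv) s = φ τ * c ^ 2 := by
    have hS'' : deriv (deriv S) τ = -(φ τ * deriv S τ) := by
      have := hSode τ; linarith
    rw [hcomp2, hS''] at hrel
    have hSne := hS' τ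
    apply mul_left_cancel₀ hSne
    linear_combination hrel
  -- second derivative of y
  have hy2 : deriv (deriv y) s
      = deriv (deriv Sinv) s • deriv x τ + c • (c • deriv (deriv x) τ) := by
    rw [hy1']
    have hd : DifferentiableAt ℝ (fun s => deriv x (Sinv s)) s :=
      (hx' _).comp s (hSinvdiff s)
    have := deriv_fun_smul (hSinvdiff' s) hd
    rw [this, hcomp]
    module
  -- substitute x'' from the ODE
  have hx'' : deriv (deriv x) τ = -(φ τ • deriv x τ) - gradV (x τ) := by
    have h := heq τ
    rw [add_assoc] at h
    rw [eq_neg_of_add_eq_zero_left h]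
    abel
  have hys : y s = x τ := by rw [hy]; rfl
  rw [hy2, hx'', hSinv'', hys]
  module
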